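/- Let n₁ ≥ 2 and n₂ ≥ 1 be integers, μ ∈ ℝ, a > 0, and b_{j,i} > 0 for j = 1,…,n₂ and i = 2,…,n₁, and set n = (n₁−1)n₂ + 1. Then the integral over ℝⁿ of the Hybrid Rosenbrock kernel equals π^{n/2} / (√a · ∏_{j=1}^{n₂} ∏_{i=2}^{n₁} √(b_{j,i})); equivalently, the normalizing constant of the kernel is √a · ∏_{j,i} √(b_{j,i}) / π^{n/2}. -/

import Mathlib

open MeasureTheory Real
open scoped ENNReal


lemma measurable_dsum {α : Type*} [MeasurableSpace α] {n₂ m : ℕ} (b : Fin n₂ → Fin m → ℝ)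
    (v : α → Fin n₂ → ℝ) (hv : Measurable v) (w : α → Fin n₂ → Fin m → ℝ) (hw : Measurable w) :
    Measurable fun x => ∑ j : Fin n₂, ∑ k : Fin m,
      b j k * (w x j k - (if hk : (k : ℕ) = 0 then v x j
        else w x j ⟨(k : ℕ) - 1, lt_of_le_of_lt (Nat.sub_le _ _) k.isLt⟩) ^ 2) ^ 2 := by
  apply Finset.measurable_sum
  intro j _
  apply Finset.measurable_sum
  intro k _
  by_cases hk : (k : ℕ) = 0
  · simp only [hk, dif_pos]
    fun_prop
  · simp only [hk, dif_neg, not_false_iff]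
    fun_prop

/-- the predecessor value for the peeled-off last column -/
noncomputable def cFun {n₂ : ℕ} (m : ℕ) (v : Fin n₂ → ℝ) (j : Fin n₂)
    (q : Fin n₂ → Fin m → ℝ) : ℝ :=
  if h : m = 0 then v j else q j ⟨m - 1, Nat.sub_lt (Nat.pos_of_ne_zero h) one_pos⟩

lemma measurable_cFun {n₂ : ℕ} (m : ℕ) (v : Fin n₂ → ℝ) (j : Fin n₂) :
    Measurable (cFun m v j) := by
  unfold cFun
  by_cases h : m = 0
  · simp only [h, dif_pos]; fun_prop
  · simp only [h, dif_neg, not_false_iff]; fun_prop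

lemma gauss_lintegral {b : ℝ} (hb : 0 < b) (c : ℝ) :
    ∫⁻ x : ℝ, ENNReal.ofReal (Real.exp (-(b * (x - c) ^ 2))) = ENNReal.ofReal (Real.sqrt (π / b)) := by
  have key : ∫⁻ x : ℝ, ENNReal.ofReal (Real.exp (-(b * x ^ 2))) = ENNReal.ofReal (Real.sqrt (π / b)) := by
    rw [← ofReal_integral_eq_lintegral_ofReal]
    · congr 1; simpa [neg_mul] using integral_gaussian b
    · simpa [neg_mul] using integrable_exp_neg_mul_sq hb
    · exact ae_of_all _ fun x => (Real.exp_pos _).le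
  calc ∫⁻ x : ℝ, ENNReal.ofReal (Real.exp (-(b * (x - c) ^ 2)))
      = ∫⁻ x : ℝ, (fun y => ENNReal.ofReal (Real.exp (-(b * y ^ 2)))) (x - c) := rfl
    _ = ∫⁻ y : ℝ, ENNReal.ofReal (Real.exp (-(b * y ^ 2))) :=
        lintegral_sub_right_eq_self (fun y => ENNReal.ofReal (Real.exp (-(b * y ^ 2)))) c
    _ = _ := key

lemma lintegral_pi_prod : ∀ (N : ℕ) (f : Fin N → ℝ → ℝ≥0∞), (∀ i, Measurable (f i)) →
    ∫⁻ y : Fin N → ℝ, ∏ i, f i (y i) = ∏ i, ∫⁻ x, f i x := by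
  intro N
  induction N with
  | zero => intro f _; simp [lintegral_const, volume_pi, Measure.pi_univ]
  | succ N ih =>
    intro f hf
    have hmp := measurePreserving_piFinSuccAbove (fun _ : Fin (N + 1) => (volume : Measure ℝ)) 0
    have hF : Measurable (fun p : ℝ × (Fin N → ℝ) => f 0 p.1 * ∏ i : Fin N, f i.succ (p.2 i)) := by
      apply Measurable.mul
      · exact (hf 0).comp measurable_fst
      · exact Finset.measurable_prod _ fun i _ =>
          (hf i.succ).comp ((measurable_pi_apply i).comp measurable_snd)
    calc ∫⁻ y : Fin (N + 1) → ℝ, ∏ i, f i (y i)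
        = ∫⁻ y : Fin (N + 1) → ℝ, (fun p : ℝ × (Fin N → ℝ) =>
            f 0 p.1 * ∏ i : Fin N, f i.succ (p.2 i))
            (MeasurableEquiv.piFinSuccAbove (fun _ => ℝ) 0 y) := by
          apply lintegral_congr; intro y
          simp [MeasurableEquiv.piFinSuccAbove, Fin.prod_univ_succ, Fin.zero_succAbove, Fin.tail]
      _ = ∫⁻ p : ℝ × (Fin N → ℝ), f 0 p.1 * ∏ i : Fin N, f i.succ (p.2 i)
            ∂((volume : Measure ℝ).prod (Measure.pi fun _ => volume)) := by
          rw [volume_pi] at *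
          exact hmp.lintegral_comp hF
      _ = (∫⁻ x, f 0 x) * ∫⁻ q : Fin N → ℝ, ∏ i : Fin N, f i.succ (q i)
            ∂(Measure.pi fun _ => volume) :=
          lintegral_prod_mul (hf 0).aemeasurable
            (Finset.measurable_prod _ fun (i : Fin N) _ => (hf i.succ).comp (measurable_pi_apply i)).aemeasurable
      _ = (∫⁻ x, f 0 x) * ∏ i : Fin N, ∫⁻ x, f i.succ x := by
          rw [← volume_pi, ih _ fun i => hf i.succ]
      _ = ∏ i, ∫⁻ x, f i x := by rw [Fin.prod_univ_succ]

lemma key_lintegral (n₂ : ℕ) : ∀ (m : ℕ) (b : Fin n₂ → Fin m → ℝ), (∀ j k, 0 < b j k) →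
    ∀ v : Fin n₂ → ℝ,
    ∫⁻ xs : Fin n₂ → Fin m → ℝ, ENNReal.ofReal (Real.exp (-∑ j : Fin n₂, ∑ k : Fin m,
        b j k * (xs j k - (if hk : (k : ℕ) = 0 then v j
          else xs j ⟨(k : ℕ) - 1, lt_of_le_of_lt (Nat.sub_le _ _) k.isLt⟩) ^ 2) ^ 2))
      = ∏ j : Fin n₂, ∏ k : Fin m, ENNReal.ofReal (Real.sqrt (π / b j k)) := by
  intro m
  induction m with
  | zero =>
    intro b hb v
    simp [lintegral_const, volume_pi, Measure.pi_univ]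
  | succ m ih =>
    intro b hb v
    have hT : MeasurePreserving (fun xs : Fin n₂ → Fin (m + 1) → ℝ =>
        MeasurableEquiv.arrowProdEquivProdArrow ℝ (Fin m → ℝ) (Fin n₂)
          (fun j => MeasurableEquiv.piFinSuccAbove (fun _ => ℝ) (Fin.last m) (xs j))) :=
      (volume_measurePreserving_arrowProdEquivProdArrow ℝ (Fin m → ℝ) (Fin n₂)).comp
        (volume_preserving_pi (fun _ : Fin n₂ =>
          volume_preserving_piFinSuccAbove (fun _ : Fin (m + 1) => ℝ) (Fin.last m)))
    have hGmeas : Measurable (fun q : Fin n₂ → Fin m → ℝ => ∑ j : Fin n₂, ∑ k : Fin m,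
        b j k.castSucc * (q j k - (if hk : (k : ℕ) = 0 then v j
          else q j ⟨(k : ℕ) - 1, lt_of_le_of_lt (Nat.sub_le _ _) k.isLt⟩) ^ 2) ^ 2) :=
      measurable_dsum _ (fun _ => v) measurable_const _ measurable_id
    have hFmeas : Measurable (fun p : (Fin n₂ → ℝ) × (Fin n₂ → Fin m → ℝ) =>
        (∏ j : Fin n₂, ENNReal.ofReal (Real.exp
            (-(b j (Fin.last m) * (p.1 j - (cFun m v j p.2) ^ 2) ^ 2)))) *
          ENNReal.ofReal (Real.exp (-∑ j : Fin n₂, ∑ k : Fin m,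
            b j k.castSucc * (p.2 j k - (if hk : (k : ℕ) = 0 then v j
              else p.2 j ⟨(k : ℕ) - 1, lt_of_le_of_lt (Nat.sub_le _ _) k.isLt⟩) ^ 2) ^ 2))) := by
      apply Measurable.mul
      · apply Finset.measurable_prod
        intro j _
        have h1 : Measurable (fun p : (Fin n₂ → ℝ) × (Fin n₂ → Fin m → ℝ) =>
            cFun m v j p.2) := (measurable_cFun m v j).comp measurable_snd
        have h2 : Measurable (fun p : (Fin n₂ → ℝ) × (Fin n₂ → Fin m → ℝ) => p.1 j) :=
          (measurable_pi_apply j).comp measurable_fst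
        exact ENNReal.measurable_ofReal.comp (Real.measurable_exp.comp
          (((h2.sub (h1.pow_const 2)).pow_const 2).const_mul _).neg)
      · exact ENNReal.measurable_ofReal.comp
          (Real.measurable_exp.comp (hGmeas.comp measurable_snd).neg)
    calc
      ∫⁻ xs : Fin n₂ → Fin (m + 1) → ℝ, ENNReal.ofReal (Real.exp
          (-∑ j : Fin n₂, ∑ k : Fin (m + 1),
            b j k * (xs j k - (if hk : (k : ℕ) = 0 then v j
              else xs j ⟨(k : ℕ) - 1, lt_of_le_of_lt (Nat.sub_le _ _) k.isLt⟩) ^ 2) ^ 2))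
        = ∫⁻ xs : Fin n₂ → Fin (m + 1) → ℝ,
            (fun p : (Fin n₂ → ℝ) × (Fin n₂ → Fin m → ℝ) =>
              (∏ j : Fin n₂, ENNReal.ofReal (Real.exp
                  (-(b j (Fin.last m) * (p.1 j - (cFun m v j p.2) ^ 2) ^ 2)))) *
                ENNReal.ofReal (Real.exp (-∑ j : Fin n₂, ∑ k : Fin m,
                  b j k.castSucc * (p.2 j k - (if hk : (k : ℕ) = 0 then v j
                    else p.2 j ⟨(k : ℕ) - 1, lt_of_le_of_lt (Nat.sub_le _ _) k.isLt⟩) ^ 2) ^ 2)))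
              (MeasurableEquiv.arrowProdEquivProdArrow ℝ (Fin m → ℝ) (Fin n₂)
                (fun j => MeasurableEquiv.piFinSuccAbove (fun _ => ℝ) (Fin.last m) (xs j))) := by
          apply lintegral_congr
          intro xs
          have hfst : (MeasurableEquiv.arrowProdEquivProdArrow ℝ (Fin m → ℝ) (Fin n₂)
                (fun j => MeasurableEquiv.piFinSuccAbove (fun _ => ℝ) (Fin.last m) (xs j))).1
              = fun j => xs j (Fin.last m) := rfl
          have hsnd : (MeasurableEquiv.arrowProdEquivProdArrow ℝ (Fin m → ℝ) (Fin n₂)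
                (fun j => MeasurableEquiv.piFinSuccAbove (fun _ => ℝ) (Fin.last m) (xs j))).2
              = fun j k => xs j k.castSucc := by
            funext j k
            show xs j ((Fin.last m).succAbove k) = xs j k.castSucc
            rw [Fin.succAbove_last]
          simp only [hfst, hsnd]
          rw [show (∑ j : Fin n₂, ∑ k : Fin (m + 1),
              b j k * (xs j k - (if hk : (k : ℕ) = 0 then v j
                else xs j ⟨(k : ℕ) - 1, lt_of_le_of_lt (Nat.sub_le _ _) k.isLt⟩) ^ 2) ^ 2)
            = (∑ j : Fin n₂, ∑ k : Fin m,
                b j k.castSucc * (xs j k.castSucc - (if hk : (k : ℕ) = 0 then v j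
                  else xs j (Fin.castSucc ⟨(k : ℕ) - 1,
                    lt_of_le_of_lt (Nat.sub_le _ _) k.isLt⟩)) ^ 2) ^ 2)
              + ∑ j : Fin n₂, b j (Fin.last m) * (xs j (Fin.last m) -
                  (cFun m v j (fun j k => xs j k.castSucc)) ^ 2) ^ 2 from by
            simp only [Fin.sum_univ_castSucc, Fin.coe_castSucc, Fin.castSucc_mk, Fin.val_last,
              cFun]
            rw [Finset.sum_add_distrib]]
          rw [neg_add, Real.exp_add, ENNReal.ofReal_mul (Real.exp_pos _).le, mul_comm,
            ← Finset.sum_neg_distrib, Real.exp_sum,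
            ENNReal.ofReal_prod_of_nonneg (fun _ _ => (Real.exp_pos _).le)]
      _ = ∫⁻ p : (Fin n₂ → ℝ) × (Fin n₂ → Fin m → ℝ),
            (∏ j : Fin n₂, ENNReal.ofReal (Real.exp
                (-(b j (Fin.last m) * (p.1 j - (cFun m v j p.2) ^ 2) ^ 2)))) *
              ENNReal.ofReal (Real.exp (-∑ j : Fin n₂, ∑ k : Fin m,
                b j k.castSucc * (p.2 j k - (if hk : (k : ℕ) = 0 then v j
                  else p.2 j ⟨(k : ℕ) - 1, lt_of_le_of_lt (Nat.sub_le _ _) k.isLt⟩) ^ 2) ^ 2)) :=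
          hT.lintegral_comp hFmeas
      _ = ∫⁻ q : Fin n₂ → Fin m → ℝ, ∫⁻ y : Fin n₂ → ℝ,
            (∏ j : Fin n₂, ENNReal.ofReal (Real.exp
                (-(b j (Fin.last m) * (y j - (cFun m v j q) ^ 2) ^ 2)))) *
              ENNReal.ofReal (Real.exp (-∑ j : Fin n₂, ∑ k : Fin m,
                b j k.castSucc * (q j k - (if hk : (k : ℕ) = 0 then v j
                  else q j ⟨(k : ℕ) - 1, lt_of_le_of_lt (Nat.sub_le _ _) k.isLt⟩) ^ 2) ^ 2)) := by
          rw [Measure.volume_eq_prod]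
          exact lintegral_prod_symm _ hFmeas.aemeasurable
      _ = ∫⁻ q : Fin n₂ → Fin m → ℝ,
            (∏ j : Fin n₂, ENNReal.ofReal (Real.sqrt (π / b j (Fin.last m)))) *
              ENNReal.ofReal (Real.exp (-∑ j : Fin n₂, ∑ k : Fin m,
                b j k.castSucc * (q j k - (if hk : (k : ℕ) = 0 then v j
                  else q j ⟨(k : ℕ) - 1, lt_of_le_of_lt (Nat.sub_le _ _) k.isLt⟩) ^ 2) ^ 2)) := by
          apply lintegral_congr
          intro q
          have hy : Measurable fun y : Fin n₂ → ℝ => ∏ j : Fin n₂, ENNReal.ofReal (Real.exp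
              (-(b j (Fin.last m) * (y j - (cFun m v j q) ^ 2) ^ 2))) := by
            apply Finset.measurable_prod
            intro j _
            exact ENNReal.measurable_ofReal.comp (Real.measurable_exp.comp
              ((((measurable_pi_apply j).sub measurable_const).pow_const 2).const_mul _).neg)
          rw [lintegral_mul_const _ hy]
          congr 1
          have hy1 : ∀ j : Fin n₂, Measurable fun y : ℝ => ENNReal.ofReal (Real.exp
              (-(b j (Fin.last m) * (y - (cFun m v j q) ^ 2) ^ 2))) := by
            intro j
            exact ENNReal.measurable_ofReal.comp (Real.measurable_exp.comp
              (((measurable_id.sub measurable_const).pow_const 2).const_mul _).neg)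
          rw [lintegral_pi_prod n₂ (fun j y => ENNReal.ofReal (Real.exp
              (-(b j (Fin.last m) * (y - (cFun m v j q) ^ 2) ^ 2)))) hy1]
          exact Finset.prod_congr rfl fun j _ =>
            gauss_lintegral (hb j (Fin.last m)) ((cFun m v j q) ^ 2)
      _ = (∏ j : Fin n₂, ENNReal.ofReal (Real.sqrt (π / b j (Fin.last m)))) *
            ∏ j : Fin n₂, ∏ k : Fin m, ENNReal.ofReal (Real.sqrt (π / b j k.castSucc)) := by
          have hg : Measurable fun q : Fin n₂ → Fin m → ℝ =>
              ENNReal.ofReal (Real.exp (-∑ j : Fin n₂, ∑ k : Fin m,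
                b j k.castSucc * (q j k - (if hk : (k : ℕ) = 0 then v j
                  else q j ⟨(k : ℕ) - 1, lt_of_le_of_lt (Nat.sub_le _ _) k.isLt⟩) ^ 2) ^ 2)) :=
            ENNReal.measurable_ofReal.comp (Real.measurable_exp.comp hGmeas.neg)
          rw [lintegral_const_mul _ hg,
            ih (fun j k => b j k.castSucc) (fun j k => hb j k.castSucc) v]
      _ = ∏ j : Fin n₂, ∏ k : Fin (m + 1), ENNReal.ofReal (Real.sqrt (π / b j k)) := by
          rw [← Finset.prod_mul_distrib]
          exact Finset.prod_congr rfl fun j _ => by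
            rw [Fin.prod_univ_castSucc, mul_comm]


/-- The Hybrid Rosenbrock kernel with block parameters `n₁, n₂`, location `μ`,
precision `a` for `x₁`, and precisions `b j k` for the variable `x_{j,i}` with
`i = k + 2`.  A state is a pair `(x₁, xs)` where `xs j k` is the coordinate
`x_{j, k+2}` (for `j = 1,…,n₂` and `i = 2,…,n₁`), and by convention the variable
preceding `x_{j,2}` is `x₁`. -/
noncomputable def hybridRosenbrockKernel (n₁ n₂ : ℕ) (μ a : ℝ)
    (b : Fin n₂ → Fin (n₁ - 1) → ℝ)
    (x₁ : ℝ) (xs : Fin n₂ → Fin (n₁ - 1) → ℝ) : ℝ :=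
  Real.exp (-a * (x₁ - μ) ^ 2 -
    ∑ j : Fin n₂, ∑ k : Fin (n₁ - 1),
      b j k * (xs j k -
        (if hk : k.val = 0 then x₁
         else xs j ⟨k.val - 1, by have := k.isLt; omega⟩) ^ 2) ^ 2)

set_option maxHeartbeats 1000000 in
/-- The integral over `ℝⁿ`, `n = (n₁-1) n₂ + 1`, of the Hybrid Rosenbrock kernel is
`π^{n/2} / (√a ∏_{j,i} √(b_{j,i}))`; equivalently its normalizing constant is
`√a ∏_{j,i} √(b_{j,i}) / π^{n/2}`. -/
theorem hybridRosenbrock_normalizing_constant (n₁ n₂ : ℕ)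
    (h₁ : 2 ≤ n₁) (h₂ : 1 ≤ n₂) (μ a : ℝ) (ha : 0 < a)
    (b : Fin n₂ → Fin (n₁ - 1) → ℝ) (hb : ∀ j k, 0 < b j k) :
    (∫ p : ℝ × (Fin n₂ → Fin (n₁ - 1) → ℝ),
        hybridRosenbrockKernel n₁ n₂ μ a b p.1 p.2)
      = π ^ ((((n₁ - 1) * n₂ + 1 : ℕ) : ℝ) / 2) /
          (Real.sqrt a * ∏ j : Fin n₂, ∏ k : Fin (n₁ - 1), Real.sqrt (b j k)) := by
  -- measurability of the kernel
  have hSmeas : Measurable (fun p : ℝ × (Fin n₂ → Fin (n₁ - 1) → ℝ) =>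
      ∑ j : Fin n₂, ∑ k : Fin (n₁ - 1),
        b j k * (p.2 j k - (if hk : (k : ℕ) = 0 then p.1
          else p.2 j ⟨(k : ℕ) - 1, lt_of_le_of_lt (Nat.sub_le _ _) k.isLt⟩) ^ 2) ^ 2) :=
    measurable_dsum (α := ℝ × (Fin n₂ → Fin (n₁ - 1) → ℝ)) b (fun p _ => p.1)
      (measurable_pi_lambda _ fun _ => measurable_fst) Prod.snd measurable_snd
  have hker : Measurable (fun p : ℝ × (Fin n₂ → Fin (n₁ - 1) → ℝ) =>
      hybridRosenbrockKernel n₁ n₂ μ a b p.1 p.2) := by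
    unfold hybridRosenbrockKernel
    exact Real.measurable_exp.comp
      (((((measurable_fst.sub measurable_const).pow_const 2).const_mul (-a))).sub hSmeas)
  have hnonneg : 0 ≤ᵐ[volume] fun p : ℝ × (Fin n₂ → Fin (n₁ - 1) → ℝ) =>
      hybridRosenbrockKernel n₁ n₂ μ a b p.1 p.2 :=
    ae_of_all _ fun p => (Real.exp_pos _).le
  rw [integral_eq_lintegral_of_nonneg_ae hnonneg hker.aestronglyMeasurable]
  -- split the kernel
  have hsplit : ∀ p : ℝ × (Fin n₂ → Fin (n₁ - 1) → ℝ),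
      ENNReal.ofReal (hybridRosenbrockKernel n₁ n₂ μ a b p.1 p.2)
        = ENNReal.ofReal (Real.exp (-(a * (p.1 - μ) ^ 2))) *
          ENNReal.ofReal (Real.exp (-∑ j : Fin n₂, ∑ k : Fin (n₁ - 1),
            b j k * (p.2 j k - (if hk : (k : ℕ) = 0 then p.1
              else p.2 j ⟨(k : ℕ) - 1, lt_of_le_of_lt (Nat.sub_le _ _) k.isLt⟩) ^ 2) ^ 2)) := by
    intro p
    rw [hybridRosenbrockKernel, sub_eq_add_neg, neg_mul, Real.exp_add,
      ENNReal.ofReal_mul (Real.exp_pos _).le]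
  have hlin : (∫⁻ p : ℝ × (Fin n₂ → Fin (n₁ - 1) → ℝ),
      ENNReal.ofReal (hybridRosenbrockKernel n₁ n₂ μ a b p.1 p.2))
      = ENNReal.ofReal (Real.sqrt (π / a)) *
        ∏ j : Fin n₂, ∏ k : Fin (n₁ - 1), ENNReal.ofReal (Real.sqrt (π / b j k)) := by
    calc ∫⁻ p : ℝ × (Fin n₂ → Fin (n₁ - 1) → ℝ),
          ENNReal.ofReal (hybridRosenbrockKernel n₁ n₂ μ a b p.1 p.2)
        = ∫⁻ p : ℝ × (Fin n₂ → Fin (n₁ - 1) → ℝ),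
            ENNReal.ofReal (Real.exp (-(a * (p.1 - μ) ^ 2))) *
            ENNReal.ofReal (Real.exp (-∑ j : Fin n₂, ∑ k : Fin (n₁ - 1),
              b j k * (p.2 j k - (if hk : (k : ℕ) = 0 then p.1
                else p.2 j ⟨(k : ℕ) - 1,
                  lt_of_le_of_lt (Nat.sub_le _ _) k.isLt⟩) ^ 2) ^ 2)) :=
          lintegral_congr hsplit
      _ = ∫⁻ x : ℝ, ∫⁻ q : Fin n₂ → Fin (n₁ - 1) → ℝ,
            ENNReal.ofReal (Real.exp (-(a * (x - μ) ^ 2))) *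
            ENNReal.ofReal (Real.exp (-∑ j : Fin n₂, ∑ k : Fin (n₁ - 1),
              b j k * (q j k - (if hk : (k : ℕ) = 0 then x
                else q j ⟨(k : ℕ) - 1,
                  lt_of_le_of_lt (Nat.sub_le _ _) k.isLt⟩) ^ 2) ^ 2)) := by
          rw [Measure.volume_eq_prod]
          apply lintegral_prod
          apply Measurable.aemeasurable
          apply Measurable.fun_mul
          · exact ENNReal.measurable_ofReal.comp (Real.measurable_exp.comp
              (((measurable_fst.sub measurable_const).pow_const 2).const_mul a).neg)
          · exact ENNReal.measurable_ofReal.comp (Real.measurable_exp.comp hSmeas.neg)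
      _ = ∫⁻ x : ℝ, ENNReal.ofReal (Real.exp (-(a * (x - μ) ^ 2))) *
            ∏ j : Fin n₂, ∏ k : Fin (n₁ - 1), ENNReal.ofReal (Real.sqrt (π / b j k)) := by
          apply lintegral_congr
          intro x
          have hg : Measurable fun q : Fin n₂ → Fin (n₁ - 1) → ℝ =>
              ENNReal.ofReal (Real.exp (-∑ j : Fin n₂, ∑ k : Fin (n₁ - 1),
                b j k * (q j k - (if hk : (k : ℕ) = 0 then x
                  else q j ⟨(k : ℕ) - 1,
                    lt_of_le_of_lt (Nat.sub_le _ _) k.isLt⟩) ^ 2) ^ 2)) :=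
            ENNReal.measurable_ofReal.comp (Real.measurable_exp.comp
              (measurable_dsum (α := Fin n₂ → Fin (n₁ - 1) → ℝ) b (fun _ _ => x) measurable_const (fun q => q) measurable_id).neg)
          rw [lintegral_const_mul _ hg]
          congr 1
          exact key_lintegral n₂ (n₁ - 1) b hb (fun _ => x)
      _ = (∫⁻ x : ℝ, ENNReal.ofReal (Real.exp (-(a * (x - μ) ^ 2)))) *
            ∏ j : Fin n₂, ∏ k : Fin (n₁ - 1), ENNReal.ofReal (Real.sqrt (π / b j k)) := by
          have h1 : Measurable fun x : ℝ => ENNReal.ofReal (Real.exp (-(a * (x - μ) ^ 2))) :=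
            ENNReal.measurable_ofReal.comp (Real.measurable_exp.comp
              (((measurable_id.sub measurable_const).pow_const 2).const_mul a).neg)
          rw [lintegral_mul_const _ h1]
      _ = _ := by rw [gauss_lintegral ha μ]
  rw [hlin]
  -- take toReal and conclude with algebra
  rw [ENNReal.toReal_mul, ENNReal.toReal_ofReal (Real.sqrt_nonneg _), ENNReal.toReal_prod]
  have hprod : ∀ j : Fin n₂, (∏ k : Fin (n₁ - 1), ENNReal.ofReal (Real.sqrt (π / b j k))).toReal
      = ∏ k : Fin (n₁ - 1), Real.sqrt (π / b j k) := by
    intro j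
    rw [ENNReal.toReal_prod]
    exact Finset.prod_congr rfl fun k _ => ENNReal.toReal_ofReal (Real.sqrt_nonneg _)
  rw [Finset.prod_congr rfl fun j _ => hprod j]
  -- now pure real algebra
  have hsd : ∀ x : ℝ, Real.sqrt (π / x) = Real.sqrt π / Real.sqrt x := fun x =>
    Real.sqrt_div Real.pi_nonneg x
  simp_rw [hsd, Finset.prod_div_distrib, Finset.prod_const, Finset.card_univ, Fintype.card_fin]
  rw [div_mul_div_comm]
  have hpow : Real.sqrt π * ((Real.sqrt π ^ (n₁ - 1)) ^ n₂) = π ^ ((((n₁ - 1) * n₂ + 1 : ℕ) : ℝ) / 2) := by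
    rw [← pow_mul, ← pow_succ']
    rw [Real.sqrt_eq_rpow, ← Real.rpow_natCast (π ^ ((1 : ℝ)/2)) ((n₁ - 1) * n₂ + 1),
      ← Real.rpow_mul Real.pi_nonneg]
    congr 1
    push_cast
    ring
  rw [hpow]
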